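/- Let p ≥ 2 be a natural number and k > 0. Let Λ̃ = {(t,x) ∈ ℝ² : 0 ≤ t < 1 and t < x < 2 - t}, and let w : Λ̃ → ℝ be continuously differentiable with (∂_t w + ∂_x w)(t,x) ≥ k·w(t,x)^p for all (t,x) ∈ Λ̃, and w(0,x) = w₀(x) > 0 for all x ∈ (0,2). Then for every x ∈ (0,2) and every t ≥ 0 with (t, x+t) ∈ Λ̃ and k·(p-1)·t·w₀(x)^{p-1} < 1, one has w(t, x+t) ≥ w₀(x) · (1 - k·(p-1)·t·w₀(x)^{p-1})^{-1/(p-1)}. -/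

import Mathlib

open Set

/-- Characteristic comparison in the backward light triangle
`Λ̃ = {(t,x) : 0 ≤ t < 1, t < x < 2-t}`: if `w` is `C¹` on `Λ̃` with
`(∂_t w + ∂_x w) ≥ k w^p` on `Λ̃` and positive initial data `w₀` on `(0,2)`, then along the
characteristic `t ↦ (t, x+t)` the solution dominates the explicit blow-up solution. -/
theorem characteristic_comparison
    (p : ℕ) (hp : 2 ≤ p) (k : ℝ) (hk : 0 < k)
    (Λ : Set (ℝ × ℝ))
    (hΛ : Λ = {q : ℝ × ℝ | 0 ≤ q.1 ∧ q.1 < 1 ∧ q.1 < q.2 ∧ q.2 < 2 - q.1})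
    (w : ℝ × ℝ → ℝ) (Dw : ℝ × ℝ → ℝ × ℝ →L[ℝ] ℝ)
    (hD : ∀ q ∈ Λ, HasFDerivWithinAt w (Dw q) Λ q)
    (hDcont : ContinuousOn Dw Λ)
    (hineq : ∀ q ∈ Λ, k * w q ^ p ≤ Dw q (1, 1))
    (w₀ : ℝ → ℝ)
    (hw0 : ∀ x ∈ Set.Ioo (0 : ℝ) 2, w (0, x) = w₀ x)
    (hw0pos : ∀ x ∈ Set.Ioo (0 : ℝ) 2, 0 < w₀ x) :
    ∀ x ∈ Set.Ioo (0 : ℝ) 2, ∀ t : ℝ, 0 ≤ t → (t, x + t) ∈ Λ →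
      k * ((p : ℝ) - 1) * t * w₀ x ^ (p - 1) < 1 →
      w₀ x * (1 - k * ((p : ℝ) - 1) * t * w₀ x ^ (p - 1)) ^ (-(1 / ((p : ℝ) - 1)))
        ≤ w (t, x + t) := by
  intro x hx t₀ ht₀0 hmemΛ hlt
  obtain ⟨hx0, hx2⟩ := hx
  have hW : 0 < w₀ x := hw0pos x ⟨hx0, hx2⟩
  set W : ℝ := w₀ x with hWdef
  have hp1 : (1:ℝ) ≤ (p:ℝ) - 1 := by
    have : (2:ℝ) ≤ (p:ℝ) := by exact_mod_cast hp
    linarith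
  have hp0 : (0:ℝ) < (p:ℝ) - 1 := by linarith
  have hpne : ((p:ℝ) - 1) ≠ 0 := ne_of_gt hp0
  have hWp : 0 < W ^ (p-1) := pow_pos hW _
  have hmemΛ' : (t₀, x + t₀) ∈ Λ := hmemΛ
  rw [hΛ] at hmemΛ'
  obtain ⟨-, ht₀1, -, hsum⟩ := hmemΛ'
  have ht₀1' : t₀ < 1 := ht₀1
  have hsum' : x + t₀ < 2 - t₀ := hsum
  -- all characteristic points in Λ
  have hmaps : ∀ t ∈ Icc (0:ℝ) t₀, (t, x + t) ∈ Λ := by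
    intro t ht
    rw [hΛ]
    exact ⟨ht.1, show t < 1 by linarith [ht.2], show t < x + t by linarith,
      show x + t < 2 - t by linarith [ht.2]⟩
  -- curve derivative
  have hγ : ∀ (s : Set ℝ) (t : ℝ),
      HasDerivWithinAt (fun u : ℝ => ((u, x + u) : ℝ × ℝ)) ((1:ℝ), (1:ℝ)) s t := by
    intro s t
    exact ((hasDerivAt_id t).prodMk ((hasDerivAt_id t).const_add x)).hasDerivWithinAt
  set g : ℝ → ℝ := fun t => w (t, x + t) with hgdef
  have key : ∀ t ∈ Icc (0:ℝ) t₀, ∀ s : Set ℝ, s ⊆ Icc (0:ℝ) t₀ →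
      HasDerivWithinAt g (Dw (t, x + t) (1, 1)) s t := by
    intro t ht s hs
    have h1 := hD (t, x + t) (hmaps t ht)
    exact h1.comp_hasDerivWithinAt t (hγ s t) (fun u hu => hmaps u (hs hu))
  have hgcont : ContinuousOn g (Icc (0:ℝ) t₀) := fun t ht =>
    (key t ht _ (subset_refl _)).continuousWithinAt
  have hB' : ∀ t ∈ Ico (0:ℝ) t₀, HasDerivWithinAt g (Dw (t, x + t) (1, 1)) (Ici t) t := by
    intro t ht
    have h1 := key t ⟨ht.1, ht.2.le⟩ (Icc t t₀) (Icc_subset_Icc ht.1 le_rfl)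
    exact h1.mono_of_mem_nhdsWithin (Icc_mem_nhdsGE ht.2)
  have hg0 : g 0 = W := by
    show w (0, x + 0) = W
    rw [add_zero]
    exact hw0 x ⟨hx0, hx2⟩
  set e : ℝ := -(1 / ((p:ℝ) - 1)) with hedef
  -- main estimate for subcritical k'
  have main : ∀ k' ∈ Ioo (0:ℝ) k,
      W * (1 - k' * ((p:ℝ) - 1) * t₀ * W ^ (p - 1)) ^ e ≤ g t₀ := by
    rintro k' ⟨hk'0, hk'k⟩
    set c : ℝ := k' * ((p:ℝ) - 1) * W ^ (p - 1) with hcdef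
    have hc0 : 0 < c := by positivity
    have hb : ∀ t ∈ Icc (0:ℝ) t₀, 0 < 1 - c * t := by
      intro t ht
      have h1 : c * t ≤ c * t₀ := mul_le_mul_of_nonneg_left ht.2 hc0.le
      have hnn : 0 ≤ ((p:ℝ) - 1) * W ^ (p - 1) * t₀ := by positivity
      have h2 : c * t₀ ≤ k * ((p:ℝ) - 1) * t₀ * W ^ (p - 1) := by
        calc c * t₀ = k' * (((p:ℝ) - 1) * W ^ (p - 1) * t₀) := by rw [hcdef]; ring
          _ ≤ k * (((p:ℝ) - 1) * W ^ (p - 1) * t₀) :=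
              mul_le_mul_of_nonneg_right hk'k.le hnn
          _ = k * ((p:ℝ) - 1) * t₀ * W ^ (p - 1) := by ring
      linarith
    set f : ℝ → ℝ := fun t => W * (1 - c * t) ^ e with hfdef
    set f' : ℝ → ℝ := fun t => W * (-c * e * (1 - c * t) ^ (e - 1)) with hf'def
    have hfd : ∀ t ∈ Icc (0:ℝ) t₀, HasDerivAt f (f' t) t := by
      intro t ht
      have h1 : HasDerivAt (fun u : ℝ => 1 - c * u) (-c) t := by
        simpa using ((hasDerivAt_id t).const_mul c).const_sub (1:ℝ)
      have h2 := h1.rpow_const (p := e) (Or.inl (ne_of_gt (hb t ht)))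
      have h3 := h2.const_mul W
      simpa [hf'def] using h3
    have hfpos : ∀ t ∈ Icc (0:ℝ) t₀, 0 < f t := by
      intro t ht
      exact mul_pos hW (Real.rpow_pos_of_pos (hb t ht) e)
    have hexp : e * (p:ℝ) = e - 1 := by
      rw [hedef]
      field_simp
      ring
    have hfid : ∀ t ∈ Icc (0:ℝ) t₀, f' t = k' * f t ^ p := by
      intro t ht
      have hbpos := hb t ht
      have hWsucc : W ^ p = W ^ (p - 1) * W := by
        conv_lhs => rw [show p = (p - 1) + 1 by omega]
        rw [pow_succ]
      rw [hf'def, hfdef]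
      simp only
      rw [mul_pow, ← Real.rpow_natCast ((1 - c * t) ^ e) p, ← Real.rpow_mul hbpos.le,
        hexp, hWsucc, hcdef, hedef]
      field_simp
    have hbound : ∀ t ∈ Ico (0:ℝ) t₀, f t = g t → f' t < Dw (t, x + t) (1, 1) := by
      intro t ht heq
      have ht' : t ∈ Icc (0:ℝ) t₀ := ⟨ht.1, ht.2.le⟩
      have h1 := hineq (t, x + t) (hmaps t ht')
      have hft := hfpos t ht'
      have h2 : f' t = k' * f t ^ p := hfid t ht'
      have h3 : k' * f t ^ p < k * f t ^ p := by
        have := pow_pos hft p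
        nlinarith
      have h4 : w (t, x + t) = f t := heq.symm
      rw [h4] at h1
      linarith
    have ha : f 0 ≤ g 0 := by
      rw [hg0, hfdef]
      simp
    have := image_le_of_deriv_right_lt_deriv_boundary' (B := g)
      (fun t ht => (hfd t ht).continuousAt.continuousWithinAt)
      (fun t ht => (hfd t ⟨ht.1, ht.2.le⟩).hasDerivWithinAt)
      ha hgcont hB' hbound (right_mem_Icc.mpr ht₀0)
    calc W * (1 - k' * ((p:ℝ) - 1) * t₀ * W ^ (p - 1)) ^ e
        = f t₀ := by rw [hfdef]; show _ = W * (1 - c * t₀) ^ e; rw [hcdef]; ring_nf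
      _ ≤ g t₀ := this
  -- limit k' → k
  have hbase : 0 < 1 - k * ((p:ℝ) - 1) * t₀ * W ^ (p - 1) := by linarith
  have hcont : ContinuousAt (fun k' : ℝ =>
      W * (1 - k' * ((p:ℝ) - 1) * t₀ * W ^ (p - 1)) ^ e) k := by
    have h1 : ContinuousAt (fun k' : ℝ => 1 - k' * ((p:ℝ) - 1) * t₀ * W ^ (p - 1)) k := by
      fun_prop
    exact (h1.rpow_const (Or.inl (ne_of_gt hbase))).const_mul W
  have htend : Filter.Tendsto (fun k' : ℝ =>
      W * (1 - k' * ((p:ℝ) - 1) * t₀ * W ^ (p - 1)) ^ e) (nhdsWithin k (Iio k))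
      (nhds (W * (1 - k * ((p:ℝ) - 1) * t₀ * W ^ (p - 1)) ^ e)) :=
    hcont.tendsto.mono_left nhdsWithin_le_nhds
  refine le_of_tendsto htend ?_
  filter_upwards [Ioo_mem_nhdsLT_of_mem (⟨hk, le_rfl⟩ : k ∈ Ioc (0:ℝ) k)] with k' hk'
  exact main k' hk'
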